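/- Let A, B be positive invertible bounded operators on a complex Hilbert space and α ∈ (0,1). Then (1−α)A + αB − ((1−α)A⁻¹ + αB⁻¹)⁻¹ = α(1−α)(A−B)(αA + (1−α)B)⁻¹(A−B). -/

import Mathlib

set_option maxHeartbeats 1000000 in
private theorem aux_smul_nonneg {H : Type*} [NormedAddCommGroup H] [InnerProductSpace ℂ H]
    [CompleteSpace H] (A : H →L[ℂ] H) (hApos : 0 ≤ A) (c : ℝ) (hc : 0 ≤ c) : 0 ≤ c • A := by
  rw [ContinuousLinearMap.nonneg_iff_isPositive] at hApos ⊢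
  constructor
  · rw [← ContinuousLinearMap.isSelfAdjoint_iff_isSymmetric]
    rw [IsSelfAdjoint, star_smul, star_trivial,
      (ContinuousLinearMap.isSelfAdjoint_iff_isSymmetric.mpr hApos.1).star_eq]
  · intro x
    have h := hApos.2 x
    have e : (c • A) x = (c:ℂ) • A x := by
      rw [ContinuousLinearMap.smul_apply, Complex.coe_smul]
    rw [ContinuousLinearMap.reApplyInnerSelf] at h ⊢
    rw [e, inner_smul_left, Complex.conj_ofReal]
    simp only [RCLike.re_to_complex] at h ⊢
    rw [Complex.mul_re]
    simp only [Complex.ofReal_re, Complex.ofReal_im, zero_mul, sub_zero]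
    exact mul_nonneg hc h

set_option maxHeartbeats 1000000 in
theorem weighted_arithmetic_harmonic_difference
    {H : Type*} [NormedAddCommGroup H] [InnerProductSpace ℂ H] [CompleteSpace H]
    (A B : H →L[ℂ] H) (hA : IsSelfAdjoint A) (hB : IsSelfAdjoint B)
    (hApos : 0 ≤ A) (hBpos : 0 ≤ B) (hAinv : IsUnit A) (hBinv : IsUnit B)
    (α : ℝ) (hα0 : 0 < α) (hα1 : α < 1) :
    (1 - α) • A + α • B -
      Ring.inverse ((1 - α) • Ring.inverse A + α • Ring.inverse B) =
    (α * (1 - α)) • ((A - B) * Ring.inverse (α • A + (1 - α) • B) * (A - B)) := by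
  have h1α : (0:ℝ) < 1 - α := by linarith
  set M : H →L[ℂ] H := α • A + (1 - α) • B with hMdef
  have hαA : IsUnit (α • A) := by
    have := (isUnit_smul_iff (Units.mk0 α hα0.ne') A).mpr hAinv
    rwa [Units.smul_def] at this
  have hM : IsUnit M := by
    refine CStarAlgebra.isUnit_of_le (α • A) ?_ ⟨aux_smul_nonneg A hApos α hα0.le, hαA⟩
    rw [ContinuousLinearMap.le_def]
    have e : M - α • A = (1 - α) • B := by rw [hMdef]; abel
    rw [e]
    exact (ContinuousLinearMap.nonneg_iff_isPositive _).mp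
      (aux_smul_nonneg B hBpos (1 - α) h1α.le)
  set C : H →L[ℂ] H := Ring.inverse M with hCdef
  have hMC : M * C = 1 := Ring.mul_inverse_cancel M hM
  have hCM : C * M = 1 := Ring.inverse_mul_cancel M hM
  set A' : H →L[ℂ] H := Ring.inverse A with hA'def
  set B' : H →L[ℂ] H := Ring.inverse B with hB'def
  have hAA' : A * A' = 1 := Ring.mul_inverse_cancel A hAinv
  have hA'A : A' * A = 1 := Ring.inverse_mul_cancel A hAinv
  have hBB' : B * B' = 1 := Ring.mul_inverse_cancel B hBinv
  have hB'B : B' * B = 1 := Ring.inverse_mul_cancel B hBinv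
  have cA : ∀ x : H →L[ℂ] H, A' * (A * x) = x := fun x => by rw [← mul_assoc, hA'A, one_mul]
  have cA2 : ∀ x : H →L[ℂ] H, A * (A' * x) = x := fun x => by rw [← mul_assoc, hAA', one_mul]
  have cB : ∀ x : H →L[ℂ] H, B' * (B * x) = x := fun x => by rw [← mul_assoc, hB'B, one_mul]
  have cB2 : ∀ x : H →L[ℂ] H, B * (B' * x) = x := fun x => by rw [← mul_assoc, hBB', one_mul]
  have cM : ∀ x : H →L[ℂ] H, M * (C * x) = x := fun x => by rw [← mul_assoc, hMC, one_mul]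
  have cM2 : ∀ x : H →L[ℂ] H, C * (M * x) = x := fun x => by rw [← mul_assoc, hCM, one_mul]
  -- two factorizations of N := (1-α) • A' + α • B'
  have hN1 : (1 - α) • A' + α • B' = A' * M * B' := by
    rw [hMdef]
    simp only [mul_add, add_mul, mul_smul_comm, smul_mul_assoc, mul_assoc]
    simp only [cA, cA2, cB, cB2, hA'A, hAA', hB'B, hBB', mul_one, one_mul]
    abel
  have hN2 : (1 - α) • A' + α • B' = B' * M * A' := by
    rw [hMdef]
    simp only [mul_add, add_mul, mul_smul_comm, smul_mul_assoc, mul_assoc]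
    simp only [cA, cA2, cB, cB2, hA'A, hAA', hB'B, hBB', mul_one, one_mul]
    abel
  have h1 : ((1 - α) • A' + α • B') * (B * C * A) = 1 := by
    rw [hN1]
    simp only [mul_assoc]
    simp only [cA, cA2, cB, cB2, cM, cM2, hA'A, hAA', hB'B, hBB', hMC, hCM]
  have h2 : (B * C * A) * ((1 - α) • A' + α • B') = 1 := by
    rw [hN1]
    simp only [mul_assoc]
    simp only [cA, cA2, cB, cB2, cM, cM2, hA'A, hAA', hB'B, hBB', hMC, hCM]
  have h3 : ((1 - α) • A' + α • B') * (A * C * B) = 1 := by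
    rw [hN2]
    simp only [mul_assoc]
    simp only [cA, cA2, cB, cB2, cM, cM2, hA'A, hAA', hB'B, hBB', hMC, hCM]
  have key : A * C * B = B * C * A := by
    calc A * C * B = (B * C * A) * (((1 - α) • A' + α • B') * (A * C * B)) := by
          rw [← mul_assoc, h2, one_mul]
      _ = B * C * A := by rw [h3, mul_one]
  have hinv : Ring.inverse ((1 - α) • A' + α • B') = B * C * A :=
    Ring.inverse_unit ⟨(1 - α) • A' + α • B', B * C * A, h1, h2⟩
  have hA'' : A = α • (A * C * A) + (1 - α) • (B * C * A) := by
    conv_lhs => rw [← mul_one A, ← hCM, ← mul_assoc]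
    rw [hMdef, mul_add, mul_smul_comm, mul_smul_comm, key]
  have hB'' : B = α • (B * C * A) + (1 - α) • (B * C * B) := by
    conv_lhs => rw [← one_mul B, ← hMC]
    rw [hMdef]
    simp only [add_mul, smul_mul_assoc]
    rw [key]
  have hexp : (A - B) * C * (A - B) = A * C * A - A * C * B - (B * C * A - B * C * B) := by
    noncomm_ring
  rw [hinv, hexp, key]
  set X : H →L[ℂ] H := A * C * A with hX
  set Y : H →L[ℂ] H := B * C * A with hY
  set Z : H →L[ℂ] H := B * C * B with hZ
  rw [hA'', hB'']
  module
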